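/- An index I satisfies additivity, null artists, equal global impact of users, and symmetry on fans if and only if there exists, for each finite set of artists N, a positive real number λ_N such that for every streaming problem (N, M, t) and every i ∈ N, I_i(N, M, t) = λ_N · Sh_i(N, M, t); in particular, the associated reward rule of such an I coincides with the Shapley index. -/

import Mathlib

open Finset

/-- A streaming problem: a finite nonempty set `N` of artists, a finite nonempty set
`M` of users, and a streams matrix `t` such that every user streamed some content. -/
structure StreamingProblem where
  N : Finset ℕ
  M : Finset ℕ
  t : ℕ → ℕ → ℕ
  N_nonempty : N.Nonempty
  M_nonempty : M.Nonempty
  streams_pos : ∀ j ∈ M, 0 < ∑ i ∈ N, t i j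

namespace StreamingProblem

/-- `L^j` : the set of artists streamed by user `j`. -/
def Lset (P : StreamingProblem) (j : ℕ) : Finset ℕ :=
  P.N.filter fun i => 0 < P.t i j

/-- `F_i` : the set of fans of artist `i`. -/
def Fset (P : StreamingProblem) (i : ℕ) : Finset ℕ :=
  P.M.filter fun j => 0 < P.t i j

/-- The Shapley index: `Sh_i(N,M,t) = ∑_{j ∈ M : t_{ij} > 0} 1 / |L^j|`. -/
noncomputable def Sh (P : StreamingProblem) (i : ℕ) : ℝ :=
  ∑ j ∈ P.M.filter (fun j => 0 < P.t i j), (1 : ℝ) / ((P.Lset j).card : ℝ)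

end StreamingProblem

open StreamingProblem

/-- Additivity of an index. -/
def AdditiveIndex (I : StreamingProblem → ℕ → ℝ) : Prop :=
  ∀ P P₁ P₂ : StreamingProblem,
    P₁.N = P.N → P₂.N = P.N →
    P.M = P₁.M ∪ P₂.M → Disjoint P₁.M P₂.M →
    (∀ i ∈ P.N, ∀ j ∈ P₁.M, P.t i j = P₁.t i j) →
    (∀ i ∈ P.N, ∀ j ∈ P₂.M, P.t i j = P₂.t i j) →
    ∀ i ∈ P.N, I P i = I P₁ i + I P₂ i

/-- Reasonable lower bound of an index. -/
def ReasonableLowerBound (I : StreamingProblem → ℕ → ℝ) : Prop :=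
  ∀ P : StreamingProblem, ∀ C ⊆ P.M,
    (C.card : ℝ) ≤
      (∑ i ∈ P.N.filter (fun i => ∃ j ∈ C, 0 < P.t i j), I P i) * (P.M.card : ℝ) /
        ∑ k ∈ P.N, I P k

/-- Equal global impact of users of an index. -/
def EqualGlobalImpactUsers (I : StreamingProblem → ℕ → ℝ) : Prop :=
  ∀ P Q Q' : StreamingProblem, ∀ j ∈ P.M, ∀ j' ∈ P.M, j ≠ j' →
    Q.N = P.N → Q.M = P.M.erase j → Q.t = P.t →
    Q'.N = P.N → Q'.M = P.M.erase j' → Q'.t = P.t →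
    ∑ i ∈ Q.N, I Q i = ∑ i ∈ Q'.N, I Q' i

/-- Symmetry on fans of an index. -/
def SymmetryOnFans (I : StreamingProblem → ℕ → ℝ) : Prop :=
  ∀ P : StreamingProblem, ∀ i ∈ P.N, ∀ i' ∈ P.N,
    P.Fset i = P.Fset i' → I P i = I P i'

/-- Order preservation of an index. -/
def OrderPreservation (I : StreamingProblem → ℕ → ℝ) : Prop :=
  ∀ P : StreamingProblem, ∀ i ∈ P.N, ∀ i' ∈ P.N,
    (∀ j ∈ P.M, P.t i j ≤ P.t i' j) → I P i ≤ I P i'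

/-- Non-unilateral manipulability of an index. -/
def NonUnilateralManipulability (I : StreamingProblem → ℕ → ℝ) : Prop :=
  ∀ P P' : StreamingProblem, ∀ i ∈ P.N,
    P'.N = P.N → P'.M = P.M →
    P.Fset i = P'.Fset i →
    (∀ j ∈ P.M, P.t i j ≤ P'.t i j) →
    (∀ k ∈ P.N, k ≠ i → ∀ j ∈ P.M, P.t k j = P'.t k j) →
    I P' i ≤ I P i

/-- Null artists axiom of an index. -/
def NullArtists (I : StreamingProblem → ℕ → ℝ) : Prop :=
  ∀ P : StreamingProblem, ∀ i ∈ P.N, (∑ j ∈ P.M, P.t i j) = 0 → I P i = 0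

/-- Equal impact of artists of an index. -/
def EqualImpactArtists (I : StreamingProblem → ℕ → ℝ) : Prop :=
  ∀ P Q Q' : StreamingProblem, ∀ i ∈ P.N, ∀ i' ∈ P.N, i ≠ i' →
    Q.N = P.N.erase i' → Q.M = P.M → Q.t = P.t →
    Q'.N = P.N.erase i → Q'.M = P.M → Q'.t = P.t →
    I P i - I Q i = I P i' - I Q' i'

/-- An index assigns nonnegative reals to the artists, with positive total sum. -/
def IsIndex (I : StreamingProblem → ℕ → ℝ) : Prop :=
  ∀ P : StreamingProblem, (∀ i ∈ P.N, 0 ≤ I P i) ∧ 0 < ∑ i ∈ P.N, I P i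

/-- The reward rule `R^I` associated with an index `I`. -/
noncomputable def Reward (I : StreamingProblem → ℕ → ℝ) (P : StreamingProblem) (i : ℕ) : ℝ :=
  I P i * (P.M.card : ℝ) / ∑ k ∈ P.N, I P k


section Aux

variable {I : StreamingProblem → ℕ → ℝ}

lemma Lset_nonempty (P : StreamingProblem) {j : ℕ} (hj : j ∈ P.M) :
    (P.Lset j).Nonempty := by
  by_contra h
  rw [Finset.not_nonempty_iff_eq_empty, StreamingProblem.Lset,
    Finset.filter_eq_empty_iff] at h
  have h1 := P.streams_pos j hj
  have h2 : ∑ i ∈ P.N, P.t i j = 0 :=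
    Finset.sum_eq_zero (fun i hi => by have := h hi; omega)
  omega

lemma sum_Sh (P : StreamingProblem) : ∑ i ∈ P.N, P.Sh i = (P.M.card : ℝ) := by
  unfold StreamingProblem.Sh
  simp only [Finset.sum_filter]
  rw [Finset.sum_comm]
  have h : ∀ j ∈ P.M,
      (∑ i ∈ P.N, if 0 < P.t i j then (1 : ℝ) / ((P.Lset j).card : ℝ) else 0) = 1 := by
    intro j hj
    rw [← Finset.sum_filter]
    have hne := Lset_nonempty P hj
    have hc : ((P.Lset j).card : ℝ) ≠ 0 := Nat.cast_ne_zero.mpr hne.card_pos.ne'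
    have : ∑ i ∈ P.N.filter (fun i => 0 < P.t i j), (1 : ℝ) / ((P.Lset j).card : ℝ)
        = ((P.Lset j).card : ℝ) * (1 / ((P.Lset j).card : ℝ)) := by
      rw [Finset.sum_const, nsmul_eq_mul]; rfl
    rw [this, mul_one_div, div_self hc]
  rw [Finset.sum_congr rfl h, Finset.sum_const, nsmul_eq_mul, mul_one]

/-- The all-ones single-user problem. -/
def onesP (N : Finset ℕ) (hN : N.Nonempty) (j : ℕ) : StreamingProblem :=
  ⟨N, {j}, fun _ _ => 1, hN, Finset.singleton_nonempty j, by
    intro k _; simpa using hN.card_pos⟩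

noncomputable def lam0 (I : StreamingProblem → ℕ → ℝ) (N : Finset ℕ) : ℝ :=
  if h : N.Nonempty then ∑ i ∈ N, I (onesP N h 0) i else 1

lemma lam0_pos (hI : IsIndex I) (N : Finset ℕ) : 0 < lam0 I N := by
  unfold lam0
  split
  · exact (hI _).2
  · norm_num

lemma singleton_value (hNull : NullArtists I) (hSym : SymmetryOnFans I)
    (P : StreamingProblem) (j : ℕ) (hM : P.M = {j}) :
    ∀ i ∈ P.N, I P i =
      if 0 < P.t i j then (∑ k ∈ P.N, I P k) / ((P.Lset j).card : ℝ) else 0 := by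
  have hzero : ∀ i ∈ P.N, ¬ 0 < P.t i j → I P i = 0 := by
    intro i hi h
    exact hNull P i hi (by rw [hM, Finset.sum_singleton]; omega)
  have hF : ∀ i ∈ P.N, 0 < P.t i j → P.Fset i = {j} := by
    intro i hi h
    rw [StreamingProblem.Fset, hM, Finset.filter_singleton, if_pos h]
  have heq : ∀ i ∈ P.N, ∀ i' ∈ P.N, 0 < P.t i j → 0 < P.t i' j → I P i = I P i' := by
    intro i hi i' hi' h h'
    exact hSym P i hi i' hi' (by rw [hF i hi h, hF i' hi' h'])
  obtain ⟨i0, hi0⟩ := Lset_nonempty P (show j ∈ P.M by rw [hM]; exact Finset.mem_singleton_self j)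
  have hi0N : i0 ∈ P.N := (Finset.mem_filter.mp hi0).1
  have hi0t : 0 < P.t i0 j := (Finset.mem_filter.mp hi0).2
  have hc : ((P.Lset j).card : ℝ) ≠ 0 :=
    Nat.cast_ne_zero.mpr (Finset.card_pos.mpr ⟨i0, hi0⟩).ne'
  have htot : ∑ k ∈ P.N, I P k = ((P.Lset j).card : ℝ) * I P i0 := by
    rw [← Finset.sum_filter_add_sum_filter_not P.N (fun i => 0 < P.t i j)]
    have h2 : ∑ k ∈ P.N.filter (fun i => ¬ 0 < P.t i j), I P k = 0 :=
      Finset.sum_eq_zero (fun k hk =>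
        hzero k (Finset.mem_filter.mp hk).1 (Finset.mem_filter.mp hk).2)
    have h1 : ∑ k ∈ P.N.filter (fun i => 0 < P.t i j), I P k
        = ((P.Lset j).card : ℝ) * I P i0 := by
      rw [Finset.sum_congr rfl (fun k hk =>
        heq k (Finset.mem_filter.mp hk).1 i0 hi0N (Finset.mem_filter.mp hk).2 hi0t)]
      rw [Finset.sum_const, nsmul_eq_mul]; rfl
    rw [h1, h2, add_zero]
  intro i hi
  by_cases h : 0 < P.t i j
  · rw [if_pos h, htot, heq i hi i0 hi0N h hi0t]
    field_simp
  · rw [if_neg h]; exact hzero i hi h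

lemma singleton_invariance (hAdd : AdditiveIndex I)
    (P P' : StreamingProblem) (j : ℕ) (hM : P.M = {j}) (hM' : P'.M = {j})
    (hN : P'.N = P.N) (ht : ∀ i ∈ P.N, P.t i j = P'.t i j) :
    ∀ i ∈ P.N, I P i = I P' i := by
  have hPj : 0 < ∑ i ∈ P.N, P.t i j :=
    P.streams_pos j (by rw [hM]; exact Finset.mem_singleton_self j)
  set f : ℕ → ℕ → ℕ := fun i k => if k = j + 1 then 1 else P.t i k with hf
  have hfj : ∀ i, f i j = P.t i j := fun i => if_neg (by omega)
  have hones : ∀ i, f i (j+1) = 1 := fun i => if_pos rfl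
  have hsum1 : 0 < ∑ i ∈ P.N, f i (j+1) := by
    rw [Finset.sum_congr rfl (fun i _ => hones i)]
    simpa using P.N_nonempty.card_pos
  have hsumj : 0 < ∑ i ∈ P.N, f i j := by
    calc 0 < ∑ i ∈ P.N, P.t i j := hPj
    _ = ∑ i ∈ P.N, f i j := (Finset.sum_congr rfl fun i _ => (hfj i).symm)
  let Pb : StreamingProblem := ⟨P.N, {j, j + 1}, f, P.N_nonempty,
    ⟨j, by simp⟩, by
      intro k hk
      rcases Finset.mem_insert.mp hk with hk | hk
      · rw [hk]; exact hsumj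
      · rw [Finset.mem_singleton] at hk; rw [hk]; exact hsum1⟩
  let Pc : StreamingProblem := ⟨P.N, {j + 1}, f, P.N_nonempty,
    Finset.singleton_nonempty _, by
      intro k hk
      rw [Finset.mem_singleton] at hk; rw [hk]; exact hsum1⟩
  have hMb : Pb.M = P.M ∪ Pc.M := by
    show ({j, j+1} : Finset ℕ) = P.M ∪ {j+1}
    rw [hM]; ext x
    simp only [Finset.mem_insert, Finset.mem_singleton, Finset.mem_union]
  have hMb' : Pb.M = P'.M ∪ Pc.M := by
    show ({j, j+1} : Finset ℕ) = P'.M ∪ {j+1}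
    rw [hM']; ext x
    simp only [Finset.mem_insert, Finset.mem_singleton, Finset.mem_union]
  have hdis : Disjoint P.M Pc.M := by
    rw [hM]; show Disjoint ({j} : Finset ℕ) {j+1}
    simp
  have hdis' : Disjoint P'.M Pc.M := by
    rw [hM']; show Disjoint ({j} : Finset ℕ) {j+1}
    simp
  have h1 := hAdd Pb P Pc rfl rfl hMb hdis
    (by intro i hi k hk; rw [hM, Finset.mem_singleton] at hk; rw [hk]
        exact hfj i)
    (by intro i hi k hk; rfl)
  have h2 := hAdd Pb P' Pc hN rfl hMb' hdis'
    (by intro i hi k hk; rw [hM', Finset.mem_singleton] at hk; rw [hk]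
        exact (hfj i).trans (ht i hi))
    (by intro i hi k hk; rfl)
  intro i hi
  have e1 := h1 i hi
  have e2 := h2 i hi
  linarith

lemma ones_total_eq (hEGIU : EqualGlobalImpactUsers I)
    (N : Finset ℕ) (hN : N.Nonempty) (a b : ℕ) :
    ∑ i ∈ N, I (onesP N hN a) i = ∑ i ∈ N, I (onesP N hN b) i := by
  rcases eq_or_ne a b with h | h
  · rw [h]
  · let Pb : StreamingProblem := ⟨N, {a, b}, fun _ _ => 1, hN,
      ⟨a, by simp⟩, by intro k _; simpa using hN.card_pos⟩
    have hQ : ({a, b} : Finset ℕ).erase a = {b} := by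
      ext x; simp only [Finset.mem_erase, Finset.mem_insert, Finset.mem_singleton]; omega
    have hQ' : ({a, b} : Finset ℕ).erase b = {a} := by
      ext x; simp only [Finset.mem_erase, Finset.mem_insert, Finset.mem_singleton]; omega
    have := hEGIU Pb (onesP N hN b) (onesP N hN a) a (by show a ∈ ({a, b} : Finset ℕ); simp) b (by show b ∈ ({a, b} : Finset ℕ); simp) h
      rfl (by show ({b} : Finset ℕ) = _; rw [hQ]) rfl
      rfl (by show ({a} : Finset ℕ) = _; rw [hQ']) rfl
    exact this.symm

lemma singleton_total (hAdd : AdditiveIndex I) (hEGIU : EqualGlobalImpactUsers I)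
    (P : StreamingProblem) (j : ℕ) (hM : P.M = {j}) :
    ∑ i ∈ P.N, I P i = lam0 I P.N := by
  have hPj : 0 < ∑ i ∈ P.N, P.t i j :=
    P.streams_pos j (by rw [hM]; exact Finset.mem_singleton_self j)
  set f : ℕ → ℕ → ℕ := fun i k => if k = j + 1 then 1 else P.t i k with hf
  have hfj : ∀ i, f i j = P.t i j := fun i => if_neg (by omega)
  have hones : ∀ i, f i (j+1) = 1 := fun i => if_pos rfl
  have hsum1 : 0 < ∑ i ∈ P.N, f i (j+1) := by
    rw [Finset.sum_congr rfl (fun i _ => hones i)]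
    simpa using P.N_nonempty.card_pos
  have hsumj : 0 < ∑ i ∈ P.N, f i j := by
    calc 0 < ∑ i ∈ P.N, P.t i j := hPj
    _ = ∑ i ∈ P.N, f i j := (Finset.sum_congr rfl fun i _ => (hfj i).symm)
  let Pbig : StreamingProblem := ⟨P.N, {j, j + 1}, f, P.N_nonempty,
    ⟨j, by simp⟩, by
      intro k hk
      rcases Finset.mem_insert.mp hk with hk | hk
      · subst hk; exact hsumj
      · rw [Finset.mem_singleton] at hk; subst hk; exact hsum1⟩
  let Qa : StreamingProblem := ⟨P.N, {j + 1}, f, P.N_nonempty,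
    Finset.singleton_nonempty _, by
      intro k hk; rw [Finset.mem_singleton] at hk; subst hk; exact hsum1⟩
  let Qb : StreamingProblem := ⟨P.N, {j}, f, P.N_nonempty,
    Finset.singleton_nonempty _, by
      intro k hk; rw [Finset.mem_singleton] at hk; subst hk; exact hsumj⟩
  -- step 1 : total P = total Qb
  have s1 : ∀ i ∈ P.N, I P i = I Qb i :=
    singleton_invariance hAdd P Qb j hM rfl rfl (fun i _ => (hfj i).symm)
  -- step 2 : total Qa = total Qb  (EGIU on Pbig)
  have hE1 : ({j, j+1} : Finset ℕ).erase j = {j+1} := by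
    ext x; simp only [Finset.mem_erase, Finset.mem_insert, Finset.mem_singleton]; omega
  have hE2 : ({j, j+1} : Finset ℕ).erase (j+1) = {j} := by
    ext x; simp only [Finset.mem_erase, Finset.mem_insert, Finset.mem_singleton]; omega
  have s2 : ∑ i ∈ P.N, I Qa i = ∑ i ∈ P.N, I Qb i :=
    hEGIU Pbig Qa Qb j (by show j ∈ ({j, j+1} : Finset ℕ); simp) (j+1) (by show j+1 ∈ ({j, j+1} : Finset ℕ); simp) (by omega)
      rfl (by show ({j+1} : Finset ℕ) = _; rw [hE1]) rfl
      rfl (by show ({j} : Finset ℕ) = _; rw [hE2]) rfl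
  -- step 3 : total Qa = total (onesP P.N _ (j+1))
  have s3 : ∀ i ∈ P.N, I Qa i = I (onesP P.N P.N_nonempty (j+1)) i :=
    singleton_invariance hAdd Qa (onesP P.N P.N_nonempty (j+1)) (j+1)
      rfl rfl rfl (fun i _ => hones i)
  -- step 4 : ones total independent of user
  have s4 := ones_total_eq hEGIU P.N P.N_nonempty (j+1) 0
  rw [Finset.sum_congr rfl s1, ← s2, Finset.sum_congr rfl s3, s4, lam0,
    dif_pos P.N_nonempty]

lemma forward' (hAdd : AdditiveIndex I) (hNull : NullArtists I)
    (hEGIU : EqualGlobalImpactUsers I) (hSym : SymmetryOnFans I) :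
    ∀ P : StreamingProblem, ∀ i ∈ P.N, I P i = lam0 I P.N * P.Sh i := by
  have key : ∀ n : ℕ, ∀ P : StreamingProblem, P.M.card = n →
      ∀ i ∈ P.N, I P i = lam0 I P.N * P.Sh i := by
    intro n
    induction n using Nat.strong_induction_on with
    | _ n ih =>
      intro P hn i hi
      obtain ⟨j, hj⟩ := P.M_nonempty
      by_cases hcase : P.M = {j}
      · -- base case: one user
        have hval := singleton_value hNull hSym P j hcase i hi
        have htot := singleton_total hAdd hEGIU P j hcase
        have hSh : P.Sh i = if 0 < P.t i j then (1 : ℝ) / ((P.Lset j).card : ℝ) else 0 := by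
          rw [StreamingProblem.Sh, hcase, Finset.filter_singleton]
          split
          · rw [Finset.sum_singleton]
          · rw [Finset.sum_empty]
        rw [hval, htot, hSh]
        split
        · rw [mul_one_div]
        · rw [mul_zero]
      · -- inductive case: at least two users
        have hsubM : P.M.erase j ⊆ P.M := Finset.erase_subset j P.M
        have herase_ne : (P.M.erase j).Nonempty := by
          by_contra h
          rw [Finset.not_nonempty_iff_eq_empty, Finset.erase_eq_empty_iff] at h
          rcases h with h | h
          · exact absurd (h ▸ hj) (Finset.notMem_empty j)
          · exact hcase h
        let P₁ : StreamingProblem := ⟨P.N, {j}, P.t, P.N_nonempty,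
          Finset.singleton_nonempty j, by
            intro k hk; rw [Finset.mem_singleton] at hk; rw [hk]
            exact P.streams_pos j hj⟩
        let P₂ : StreamingProblem := ⟨P.N, P.M.erase j, P.t, P.N_nonempty,
          herase_ne, fun k hk => P.streams_pos k (hsubM hk)⟩
        have hMsplit : P.M = {j} ∪ P.M.erase j := by
          ext x
          simp only [Finset.mem_union, Finset.mem_singleton, Finset.mem_erase]
          constructor
          · intro hx; by_cases hxj : x = j
            · exact Or.inl hxj
            · exact Or.inr ⟨hxj, hx⟩
          · rintro (rfl | ⟨_, hx⟩)
            · exact hj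
            · exact hx
        have hdis : Disjoint P₁.M P₂.M := by
          show Disjoint ({j} : Finset ℕ) (P.M.erase j)
          simp [Finset.disjoint_singleton_left]
        have hadd := hAdd P P₁ P₂ rfl rfl hMsplit hdis
          (fun i _ k _ => rfl) (fun i _ k _ => rfl) i hi
        have hc1 : P₁.M.card = 1 := Finset.card_singleton j
        have hc2 : P₂.M.card = n - 1 := by
          show (P.M.erase j).card = n - 1
          rw [Finset.card_erase_of_mem hj, hn]
        have hn2 : 2 ≤ n := by
          have h1 : 1 ≤ n := by
            rw [← hn]; exact Finset.card_pos.mpr ⟨j, hj⟩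
          rcases Nat.lt_or_ge n 2 with h | h
          · exfalso
            have : P.M.card = 1 := by omega
            obtain ⟨a, ha⟩ := Finset.card_eq_one.mp this
            apply hcase
            rw [ha]
            have : j ∈ ({a} : Finset ℕ) := ha ▸ hj
            rw [Finset.mem_singleton] at this
            rw [this]
          · exact h
        have ih1 := ih 1 (by omega) P₁ hc1 i hi
        have ih2 := ih (n - 1) (by omega) P₂ hc2 i hi
        have hShsplit : P.Sh i = P₁.Sh i + P₂.Sh i := by
          show P.Sh i = (∑ k ∈ Finset.filter (fun k => 0 < P.t i k) {j},
              (1 : ℝ) / ((P.Lset k).card : ℝ)) +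
            ∑ k ∈ Finset.filter (fun k => 0 < P.t i k) (P.M.erase j),
              (1 : ℝ) / ((P.Lset k).card : ℝ)
          rw [StreamingProblem.Sh]
          conv_lhs => rw [hMsplit]
          rw [Finset.filter_union, Finset.sum_union
            (Finset.disjoint_filter_filter hdis)]
        rw [hadd, ih1, ih2, hShsplit]
        show lam0 I P.N * _ + lam0 I P.N * _ = _
        ring
  exact fun P => key P.M.card P rfl

lemma backward' (lam : Finset ℕ → ℝ)
    (hrep : ∀ P : StreamingProblem, ∀ i ∈ P.N, I P i = lam P.N * P.Sh i) :
    AdditiveIndex I ∧ NullArtists I ∧ EqualGlobalImpactUsers I ∧ SymmetryOnFans I := by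
  refine ⟨?_, ?_, ?_, ?_⟩
  · -- additivity
    intro P P₁ P₂ hN1 hN2 hM hdis ht1 ht2 i hi
    rw [hrep P i hi, hrep P₁ i (hN1 ▸ hi), hrep P₂ i (hN2 ▸ hi), hN1, hN2, ← mul_add]
    congr 1
    have hL : ∀ (Q : StreamingProblem), Q.N = P.N →
        (∀ i ∈ P.N, ∀ j ∈ Q.M, P.t i j = Q.t i j) →
        ∀ j ∈ Q.M, P.Lset j = Q.Lset j := by
      intro Q hQN htQ j hjQ
      show P.N.filter (fun x => 0 < P.t x j) = Q.N.filter (fun x => 0 < Q.t x j)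
      rw [hQN]
      exact Finset.filter_congr (fun x hx => by rw [htQ x hx j hjQ])
    have hpart : ∀ (Q : StreamingProblem), Q.N = P.N →
        (∀ i ∈ P.N, ∀ j ∈ Q.M, P.t i j = Q.t i j) →
        ∑ j ∈ Q.M.filter (fun j => 0 < P.t i j), (1 : ℝ) / ((P.Lset j).card : ℝ)
          = Q.Sh i := by
      intro Q hQN htQ
      rw [StreamingProblem.Sh,
        Finset.filter_congr (fun j hjQ => by rw [htQ i hi j hjQ])]
      exact Finset.sum_congr rfl (fun j hjq => by
        rw [hL Q hQN htQ j (Finset.mem_filter.mp hjq).1])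
    rw [StreamingProblem.Sh]
    conv_lhs => rw [hM]
    rw [Finset.filter_union, Finset.sum_union (Finset.disjoint_filter_filter hdis),
      hpart P₁ hN1 ht1, hpart P₂ hN2 ht2]
  · -- null artists
    intro P i hi h
    rw [hrep P i hi, StreamingProblem.Sh, Finset.filter_false_of_mem, Finset.sum_empty,
      mul_zero]
    intro j hj
    have := (Finset.sum_eq_zero_iff.mp h) j hj
    omega
  · -- equal global impact of users
    intro P Q Q' j hj j' hj' hne hQN hQM hQt hQ'N hQ'M hQ't
    have e : ∀ (R : StreamingProblem), ∑ i ∈ R.N, I R i = lam R.N * (R.M.card : ℝ) := by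
      intro R
      rw [Finset.sum_congr rfl (fun i hi => hrep R i hi), ← Finset.mul_sum, sum_Sh]
    rw [e Q, e Q', hQN, hQ'N, hQM, hQ'M, Finset.card_erase_of_mem hj,
      Finset.card_erase_of_mem hj']
  · -- symmetry on fans
    intro P i hi i' hi' hF
    rw [hrep P i hi, hrep P i' hi']
    congr 1
    rw [StreamingProblem.Sh, StreamingProblem.Sh]
    have hFF : P.M.filter (fun j => 0 < P.t i j) = P.M.filter (fun j => 0 < P.t i' j) := hF
    rw [hFF]

end Aux

/-- Characterization of the Shapley index. -/
theorem shapley_characterization_5 (I : StreamingProblem → ℕ → ℝ) (hI : IsIndex I) :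
    ((AdditiveIndex I ∧ NullArtists I ∧ EqualGlobalImpactUsers I ∧ SymmetryOnFans I) ↔
      ∃ lam : Finset ℕ → ℝ, (∀ N : Finset ℕ, 0 < lam N) ∧
        ∀ P : StreamingProblem, ∀ i ∈ P.N, I P i = lam P.N * P.Sh i) ∧
    ((AdditiveIndex I ∧ NullArtists I ∧ EqualGlobalImpactUsers I ∧ SymmetryOnFans I) →
      ∀ P : StreamingProblem, ∀ i ∈ P.N, Reward I P i = P.Sh i) := by
  constructor
  · constructor
    · rintro ⟨hAdd, hNull, hEGIU, hSym⟩
      exact ⟨lam0 I, lam0_pos hI, forward' hAdd hNull hEGIU hSym⟩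
    · rintro ⟨lam, _, hrep⟩
      exact backward' lam hrep
  · rintro ⟨hAdd, hNull, hEGIU, hSym⟩ P i hi
    have hrep := forward' hAdd hNull hEGIU hSym
    rw [Reward, hrep P i hi, Finset.sum_congr rfl (fun k hk => hrep P k hk),
      ← Finset.mul_sum, sum_Sh]
    have hlam : lam0 I P.N ≠ 0 := (lam0_pos hI P.N).ne'
    have hMc : (P.M.card : ℝ) ≠ 0 :=
      Nat.cast_ne_zero.mpr P.M_nonempty.card_pos.ne'
    field_simp
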